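/- For every 2 ≤ k ≤ n and 0 ≤ c₁ ≤ c₂, the expected number of directed k-cycles (in the complete graph on n vertices with i.i.d. mean-1 exponential edge weights) whose total weight lies in (c₁·k/n, c₂·k/n] is at most (c₂^k − c₁^k)·k^k/(k·k!). -/

import Mathlib

open MeasureTheory ProbabilityTheory
open scoped Classical

/-- The weight of the directed cycle through `f 0, f 1, …, f (k-1), f 0` with arc
weights `w`. -/
def cycleWeight {n k : ℕ} (w : Fin n → Fin n → ℝ) (f : Fin k → Fin n) : ℝ :=
  ∑ i : Fin k, w (f i) (f ⟨(i.1 + 1) % k, Nat.mod_lt _ i.pos⟩)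

/-- The number of directed `k`-cycles whose weight lies in `(c₁ k/n, c₂ k/n]`:
each cycle corresponds to exactly `k` injective tuples (its rotations). -/
noncomputable def cycleCountIn (n k : ℕ) (w : Fin n → Fin n → ℝ) (c₁ c₂ : ℝ) : ℝ :=
  (1 / (k : ℝ)) * ∑ f ∈ Finset.univ.filter (fun f : Fin k → Fin n => Function.Injective f),
    (if c₁ * k / n < cycleWeight w f ∧ cycleWeight w f ≤ c₂ * k / n then (1 : ℝ) else 0)

open Real Set
open scoped ENNReal

lemma aux_exp_sub {a b : ℝ} (ha : 0 ≤ a) (hab : a ≤ b) :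
    Real.exp (-a) - Real.exp (-b) ≤ b - a := by
  have h1 : Real.exp (-a) ≤ 1 := Real.exp_le_one_iff.mpr (by linarith)
  have h2 : (a - b) + 1 ≤ Real.exp (a - b) := Real.add_one_le_exp _
  have h3 : Real.exp (-b) = Real.exp (-a) * Real.exp (a - b) := by
    rw [← Real.exp_add]; ring_nf
  have h4 : 0 < Real.exp (-a) := Real.exp_pos _
  nlinarith

lemma aux_zero_on_Ioi (M : ℕ) (hM : 1 ≤ M) (c : ℝ) :
    Set.EqOn (fun _ : ℝ => (0:ℝ)) (fun x => max (c - x) 0 ^ M) (Set.Ioi (max c 0)) := by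
  intro x hx
  simp only [Set.mem_Ioi] at hx
  have : c - x < 0 := by
    have := le_max_left c 0; linarith
  simp only [max_eq_right this.le]
  rw [zero_pow (by omega)]

lemma aux_J_int (M : ℕ) (hM : 1 ≤ M) (c : ℝ) :
    IntegrableOn (fun x => max (c - x) 0 ^ M) (Set.Ici (0:ℝ)) := by
  have hcont : Continuous (fun x : ℝ => max (c - x) 0 ^ M) :=
    ((continuous_const.sub continuous_id).max continuous_const).pow M
  have : Set.Ici (0:ℝ) = Set.Icc 0 (max c 0) ∪ Set.Ioi (max c 0) :=
    (Set.Icc_union_Ioi_eq_Ici (le_max_right _ _)).symm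
  rw [this]
  refine MeasureTheory.IntegrableOn.union ?_ ?_
  · exact hcont.integrableOn_Icc
  · exact (integrableOn_zero).congr_fun (aux_zero_on_Ioi M hM c) measurableSet_Ioi

lemma aux_J (M : ℕ) (hM : 1 ≤ M) (c : ℝ) :
    ∫ x in Set.Ici (0:ℝ), max (c - x) 0 ^ M = max c 0 ^ (M+1) / (M+1) := by
  rcases le_or_gt c 0 with hc | hc
  · rw [max_eq_right hc]
    rw [setIntegral_congr_fun measurableSet_Ici (g := fun _ => (0:ℝ)) ?_]
    · simp [zero_pow (by omega : M + 1 ≠ 0)]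
    · intro x hx
      simp only [Set.mem_Ici] at hx
      have hcx : c - x ≤ 0 := by linarith
      simp [max_eq_right hcx, zero_pow (by omega : M ≠ 0)]
  · have hsplit : Set.Ici (0:ℝ) = Set.Icc 0 c ∪ Set.Ioi c :=
      (Set.Icc_union_Ioi_eq_Ici hc.le).symm
    have hmax : max c 0 = c := max_eq_left hc.le
    have hdisj : Disjoint (Set.Icc (0:ℝ) c) (Set.Ioi c) :=
      (Set.Iic_disjoint_Ioi le_rfl).mono_left Set.Icc_subset_Iic_self
    have hint1 : IntegrableOn (fun x => max (c - x) 0 ^ M) (Set.Icc (0:ℝ) c) :=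
      (((continuous_const.sub continuous_id).max continuous_const).pow M).integrableOn_Icc
    have hint2 : IntegrableOn (fun x => max (c - x) 0 ^ M) (Set.Ioi c) := by
      have h0 := aux_zero_on_Ioi M hM c
      rw [hmax] at h0
      exact (integrableOn_zero).congr_fun h0 measurableSet_Ioi
    rw [hsplit, setIntegral_union hdisj measurableSet_Ioi hint1 hint2]
    have h2 : ∫ x in Set.Ioi c, max (c - x) 0 ^ M = 0 := by
      rw [setIntegral_congr_fun measurableSet_Ioi (g := fun _ => (0:ℝ))]
      · simp
      · intro x hx; exact ((aux_zero_on_Ioi M hM c) (by rwa [hmax])).symm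
    have h1 : ∫ x in Set.Icc 0 c, max (c - x) 0 ^ M = c ^ (M+1) / (M+1) := by
      rw [setIntegral_congr_fun measurableSet_Icc (g := fun x => (c - x) ^ M) ?_]
      · rw [MeasureTheory.integral_Icc_eq_integral_Ioc, ← intervalIntegral.integral_of_le hc.le]
        have := intervalIntegral.integral_comp_sub_left (a := 0) (b := c) (fun x => x ^ M) c
        rw [this]
        simp [integral_pow]
      · intro x hx
        simp only [Set.mem_Icc] at hx
        simp [max_eq_left (by linarith : (0:ℝ) ≤ c - x)]
    rw [h1, h2, hmax, add_zero]

section Prob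
variable {Ω : Type*} [MeasurableSpace Ω] {μ : Measure Ω} [IsProbabilityMeasure μ]

lemma tail_nonpos_zero {X : Ω → ℝ} (hm : Measurable X)
    (hX : ∀ x : ℝ, 0 ≤ x → μ {ω | x < X ω} = ENNReal.ofReal (Real.exp (-x))) :
    μ {ω | X ω ≤ 0} = 0 := by
  have h := hX 0 le_rfl
  simp only [neg_zero, Real.exp_zero, ENNReal.ofReal_one] at h
  have hms : MeasurableSet {ω | (0:ℝ) < X ω} := measurableSet_lt measurable_const hm
  have hc : {ω | X ω ≤ 0} = {ω | (0:ℝ) < X ω}ᶜ := by ext ω; simp [not_lt]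
  rw [hc, measure_compl hms (measure_ne_top _ _), measure_univ, h, tsub_self]

lemma tail_single {X : Ω → ℝ} (hm : Measurable X)
    (hX : ∀ x : ℝ, 0 ≤ x → μ {ω | x < X ω} = ENNReal.ofReal (Real.exp (-x)))
    {a b : ℝ} (hab : a ≤ b) :
    μ {ω | a < X ω ∧ X ω ≤ b} ≤ ENNReal.ofReal (max b 0 - max a 0) := by
  rcases le_or_gt b 0 with hb | hb
  · have hsub : {ω | a < X ω ∧ X ω ≤ b} ⊆ {ω | X ω ≤ 0} := fun ω h => le_trans h.2 hb
    rw [measure_mono_null hsub (tail_nonpos_zero hm hX)]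
    exact zero_le
  · set a' := max a 0 with ha'
    have ha'0 : 0 ≤ a' := le_max_right a 0
    have ha'b : a' ≤ b := max_le hab hb.le
    have hsub : {ω | a < X ω ∧ X ω ≤ b} ⊆ {ω | a' < X ω ∧ X ω ≤ b} ∪ {ω | X ω ≤ 0} := by
      intro ω h
      rcases le_or_gt (X ω) 0 with h0 | h0
      · exact Or.inr h0
      · exact Or.inl ⟨max_lt h.1 h0, h.2⟩
    have key : μ {ω | a' < X ω ∧ X ω ≤ b} ≤ ENNReal.ofReal (b - a') := by
      have hset : {ω | a' < X ω ∧ X ω ≤ b} = {ω | a' < X ω} \ {ω | b < X ω} := by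
        ext ω; simp only [Set.mem_setOf_eq, Set.mem_diff, not_lt]
      have hsub2 : {ω | b < X ω} ⊆ {ω | a' < X ω} := fun ω h => lt_of_le_of_lt ha'b h
      have hmsb : MeasurableSet {ω | b < X ω} := measurableSet_lt measurable_const hm
      rw [hset, measure_diff hsub2 hmsb.nullMeasurableSet (measure_ne_top _ _),
        hX a' ha'0, hX b (le_trans ha'0 ha'b),
        ← ENNReal.ofReal_sub _ (Real.exp_pos _).le]
      exact ENNReal.ofReal_le_ofReal (aux_exp_sub ha'0 ha'b)
    calc μ {ω | a < X ω ∧ X ω ≤ b}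
        ≤ μ ({ω | a' < X ω ∧ X ω ≤ b} ∪ {ω | X ω ≤ 0}) := measure_mono hsub
      _ ≤ μ {ω | a' < X ω ∧ X ω ≤ b} + μ {ω | X ω ≤ 0} := measure_union_le _ _
      _ = μ {ω | a' < X ω ∧ X ω ≤ b} := by rw [tail_nonpos_zero hm hX, add_zero]
      _ ≤ ENNReal.ofReal (b - a') := key
      _ = ENNReal.ofReal (max b 0 - max a 0) := by rw [max_eq_left hb.le]

lemma map_eq_exp {X : Ω → ℝ} (hm : Measurable X)
    (hX : ∀ x : ℝ, 0 ≤ x → μ {ω | x < X ω} = ENNReal.ofReal (Real.exp (-x))) :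
    μ.map X = volume.withDensity (exponentialPDF 1) := by
  have hP : IsProbabilityMeasure (μ.map X) := Measure.isProbabilityMeasure_map hm.aemeasurable
  refine MeasureTheory.Measure.ext_of_Iic _ _ (fun t => ?_)
  rw [Measure.map_apply hm measurableSet_Iic,
    withDensity_apply _ measurableSet_Iic, lintegral_exponentialPDF_eq_antiDeriv one_pos]
  rcases le_or_gt 0 t with ht | ht
  · have hms : MeasurableSet {ω | t < X ω} := measurableSet_lt measurable_const hm
    have hpre : X ⁻¹' Set.Iic t = {ω | t < X ω}ᶜ := by ext ω; simp [not_lt]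
    rw [hpre, measure_compl hms (measure_ne_top _ _), measure_univ, hX t ht, if_pos ht,
      one_mul, ENNReal.ofReal_sub _ (Real.exp_pos _).le, ENNReal.ofReal_one]
  · rw [if_neg (not_le.mpr ht), ENNReal.ofReal_zero]
    have hsub : X ⁻¹' Set.Iic t ⊆ {ω | X ω ≤ 0} := fun ω h => le_trans h ht.le
    exact measure_mono_null hsub (tail_nonpos_zero hm hX)

end Prob

lemma lintegral_psi_bound (M : ℕ) (hM : 1 ≤ M) {a b : ℝ} (hab : a ≤ b) :
    ∫⁻ x, exponentialPDF 1 x *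
        ENNReal.ofReal ((max (b - x) 0 ^ M - max (a - x) 0 ^ M) / M.factorial) ≤
      ENNReal.ofReal ((max b 0 ^ (M+1) - max a 0 ^ (M+1)) / (M+1).factorial) := by
  set ψ : ℝ → ℝ := fun x => (max (b - x) 0 ^ M - max (a - x) 0 ^ M) / M.factorial with hψ
  have hψnn : ∀ x, 0 ≤ ψ x := by
    intro x
    apply div_nonneg _ (by positivity)
    have : max (a - x) 0 ≤ max (b - x) 0 := max_le_max (by linarith) le_rfl
    have := pow_le_pow_left₀ (le_max_right (a - x) 0) this M
    linarith
  have hbound : ∀ x, exponentialPDF 1 x * ENNReal.ofReal (ψ x) ≤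
      (Set.Ici (0:ℝ)).indicator (fun x => ENNReal.ofReal (ψ x)) x := by
    intro x
    rcases lt_or_ge x 0 with hx | hx
    · rw [exponentialPDF_of_neg hx, zero_mul]
      exact zero_le
    · have hind : (Set.Ici (0:ℝ)).indicator (fun x => ENNReal.ofReal (ψ x)) x
          = ENNReal.ofReal (ψ x) := Set.indicator_of_mem hx _
      rw [hind, exponentialPDF_of_nonneg hx]
      calc ENNReal.ofReal (1 * Real.exp (-(1 * x))) * ENNReal.ofReal (ψ x)
          ≤ 1 * ENNReal.ofReal (ψ x) := by
            apply mul_le_mul_left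
            rw [← ENNReal.ofReal_one]
            apply ENNReal.ofReal_le_ofReal
            rw [one_mul]
            exact Real.exp_le_one_iff.mpr (by linarith)
        _ = ENNReal.ofReal (ψ x) := one_mul _
  calc ∫⁻ x, exponentialPDF 1 x * ENNReal.ofReal (ψ x)
      ≤ ∫⁻ x, (Set.Ici (0:ℝ)).indicator (fun x => ENNReal.ofReal (ψ x)) x :=
        lintegral_mono hbound
    _ = ∫⁻ x in Set.Ici (0:ℝ), ENNReal.ofReal (ψ x) := by
        rw [lintegral_indicator measurableSet_Ici]
    _ = ENNReal.ofReal (∫ x in Set.Ici (0:ℝ), ψ x) := by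
        rw [← MeasureTheory.ofReal_integral_eq_lintegral_ofReal]
        · exact ((aux_J_int M hM b).sub (aux_J_int M hM a)).div_const _
        · exact Filter.Eventually.of_forall hψnn
    _ ≤ ENNReal.ofReal ((max b 0 ^ (M+1) - max a 0 ^ (M+1)) / (M+1).factorial) := by
        apply ENNReal.ofReal_le_ofReal
        have hint : ∫ x in Set.Ici (0:ℝ), ψ x
            = ((∫ x in Set.Ici (0:ℝ), max (b - x) 0 ^ M)
              - ∫ x in Set.Ici (0:ℝ), max (a - x) 0 ^ M) / M.factorial := by
          rw [hψ]
          rw [integral_div]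
          rw [integral_sub (aux_J_int M hM b) (aux_J_int M hM a)]
        rw [hint, aux_J M hM b, aux_J M hM a]
        apply le_of_eq
        rw [Nat.factorial_succ]
        have h1 : (0:ℝ) < M + 1 := by positivity
        have h2 : (0:ℝ) < M.factorial := by positivity
        field_simp
        push_cast
        ring

lemma tail_sum {Ω : Type*} [MeasurableSpace Ω] {μ : Measure Ω} [IsProbabilityMeasure μ]
    {ι : Type*} (X : ι → Ω → ℝ) (hmeas : ∀ i, Measurable (X i))
    (hindep : iIndepFun X μ)
    (hexp : ∀ i, ∀ x : ℝ, 0 ≤ x → μ {ω | x < X i ω} = ENNReal.ofReal (Real.exp (-x)))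
    (s : Finset ι) (hs : s.Nonempty) :
    ∀ a b : ℝ, a ≤ b →
      μ {ω | a < ∑ i ∈ s, X i ω ∧ ∑ i ∈ s, X i ω ≤ b} ≤
        ENNReal.ofReal ((max b 0 ^ s.card - max a 0 ^ s.card) / s.card.factorial) := by
  induction s using Finset.induction_on with
  | empty => exact absurd hs (by simp)
  | @insert j s hj IH =>
    intro a b hab
    by_cases hsne : s.Nonempty
    case neg =>
      have hse : s = ∅ := Finset.not_nonempty_iff_eq_empty.mp hsne
      subst hse
      simp only [Finset.sum_insert (Finset.notMem_empty j), Finset.sum_empty, add_zero,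
        Finset.card_insert_of_notMem (Finset.notMem_empty j), Finset.card_empty, zero_add,
        pow_one, Nat.factorial_one, Nat.cast_one, div_one]
      exact tail_single (hmeas j) (hexp j) hab
    case pos =>
      have hM : 1 ≤ s.card := Finset.card_pos.mpr hsne
      set S : Ω → ℝ := fun ω => ∑ i ∈ s, X i ω with hS
      have hSm : Measurable S := Finset.measurable_sum s (fun i _ => hmeas i)
      have hXm : Measurable (X j) := hmeas j
      have hfun : (∑ i ∈ s, X i) = S := by
        funext ω; rw [hS]; simp [Finset.sum_apply]
      have hInd : IndepFun (X j) S μ := by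
        have h := hindep.indepFun_finsetSum_of_notMem hmeas hj
        rw [hfun] at h
        exact h.symm
      have hmap : μ.map (fun ω => (X j ω, S ω)) = (μ.map (X j)).prod (μ.map S) :=
        (indepFun_iff_map_prod_eq_prod_map_map hXm.aemeasurable hSm.aemeasurable).mp hInd
      set E : Set (ℝ × ℝ) := {p : ℝ × ℝ | a < p.1 + p.2 ∧ p.1 + p.2 ≤ b} with hEdef
      have hE : MeasurableSet E := by
        apply MeasurableSet.inter
        · exact measurableSet_lt measurable_const (measurable_fst.add measurable_snd)
        · exact measurableSet_le (measurable_fst.add measurable_snd) measurable_const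
      have hEv : {ω | a < ∑ i ∈ insert j s, X i ω ∧ ∑ i ∈ insert j s, X i ω ≤ b}
          = (fun ω => (X j ω, S ω)) ⁻¹' E := by
        ext ω
        simp only [Set.mem_setOf_eq, Set.mem_preimage, hEdef, Finset.sum_insert hj, hS]
      rw [hEv, ← Measure.map_apply (hXm.prodMk hSm) hE, hmap, Measure.prod_apply hE]
      have hstep : ∀ x : ℝ, (μ.map S) (Prod.mk x ⁻¹' E) ≤
          ENNReal.ofReal ((max (b - x) 0 ^ s.card - max (a - x) 0 ^ s.card) / s.card.factorial) := by
        intro x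
        have hpre : Prod.mk x ⁻¹' E = {s' : ℝ | a - x < s' ∧ s' ≤ b - x} := by
          ext s'
          simp only [Set.mem_preimage, hEdef, Set.mem_setOf_eq]
          constructor <;> rintro ⟨h1, h2⟩ <;> constructor <;> linarith
        have hms : MeasurableSet {s' : ℝ | a - x < s' ∧ s' ≤ b - x} := measurableSet_Ioc
        rw [hpre, Measure.map_apply hSm hms]
        have : S ⁻¹' {s' : ℝ | a - x < s' ∧ s' ≤ b - x}
            = {ω | a - x < ∑ i ∈ s, X i ω ∧ ∑ i ∈ s, X i ω ≤ b - x} := rfl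
        rw [this]
        exact IH hsne (a - x) (b - x) (by linarith)
      calc ∫⁻ x, (μ.map S) (Prod.mk x ⁻¹' E) ∂(μ.map (X j))
          ≤ ∫⁻ x, ENNReal.ofReal
              ((max (b - x) 0 ^ s.card - max (a - x) 0 ^ s.card) / s.card.factorial)
              ∂(μ.map (X j)) := lintegral_mono hstep
        _ = ∫⁻ x, exponentialPDF 1 x * ENNReal.ofReal
              ((max (b - x) 0 ^ s.card - max (a - x) 0 ^ s.card) / s.card.factorial) := by
            have hpdfm : Measurable (exponentialPDF 1) :=
              (measurable_exponentialPDFReal 1).ennreal_ofReal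
            rw [map_eq_exp hXm (hexp j),
              lintegral_withDensity_eq_lintegral_mul _ hpdfm (by fun_prop)]
            rfl
        _ ≤ ENNReal.ofReal ((max b 0 ^ (s.card + 1) - max a 0 ^ (s.card + 1))
              / (s.card + 1).factorial) := lintegral_psi_bound s.card hM hab
        _ = ENNReal.ofReal ((max b 0 ^ (insert j s).card - max a 0 ^ (insert j s).card)
              / (insert j s).card.factorial) := by
            rw [Finset.card_insert_of_notMem hj]

/-- For `2 ≤ k ≤ n` and `0 ≤ c₁ ≤ c₂`, the expected number of directed `k`-cycles,
in the complete graph on `n` vertices with i.i.d. mean-1 exponential edge weights,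
whose total weight lies in `(c₁·k/n, c₂·k/n]`, is at most `(c₂^k − c₁^k)·k^k/(k·k!)`. -/
theorem expected_light_kcycles_le
    {Ω : Type*} [MeasurableSpace Ω] (μ : Measure Ω) [IsProbabilityMeasure μ]
    (n k : ℕ) (hk : 2 ≤ k) (hkn : k ≤ n)
    (w : Fin n → Fin n → Ω → ℝ) (hmeas : ∀ i j, Measurable (w i j))
    (hindep : iIndepFun (fun p : Fin n × Fin n => w p.1 p.2) μ)
    (hexp : ∀ i j, ∀ x : ℝ, 0 ≤ x →
      μ {ω | x < w i j ω} = ENNReal.ofReal (Real.exp (-x)))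
    (c₁ c₂ : ℝ) (hc₁ : 0 ≤ c₁) (hc : c₁ ≤ c₂) :
    ∫ ω, cycleCountIn n k (fun i j => w i j ω) c₁ c₂ ∂μ ≤
      (c₂ ^ k - c₁ ^ k) * (k : ℝ) ^ k / ((k : ℝ) * (k.factorial : ℝ)) := by
  have hn : 0 < n := lt_of_lt_of_le (by omega) hkn
  have hkpos : (0:ℝ) < k := by exact_mod_cast (by omega : 0 < k)
  have hnpos : (0:ℝ) < n := by exact_mod_cast hn
  set a : ℝ := c₁ * k / n with hadef
  set b : ℝ := c₂ * k / n with hbdef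
  have ha0 : 0 ≤ a := by positivity
  have hab : a ≤ b := by
    rw [hadef, hbdef]
    gcongr
  have hb0 : 0 ≤ b := le_trans ha0 hab
  set F := Finset.univ.filter (fun f : Fin k → Fin n => Function.Injective f) with hF
  have hWm : ∀ f : Fin k → Fin n, Measurable (fun ω => cycleWeight (fun i j => w i j ω) f) := by
    intro f
    unfold cycleWeight
    exact Finset.measurable_sum _ (fun i _ => hmeas _ _)
  set Ev : (Fin k → Fin n) → Set Ω := fun f =>
    {ω | a < cycleWeight (fun i j => w i j ω) f ∧ cycleWeight (fun i j => w i j ω) f ≤ b}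
    with hEvdef
  have hEvm : ∀ f, MeasurableSet (Ev f) := fun f =>
    (measurableSet_lt measurable_const (hWm f)).inter (measurableSet_le (hWm f) measurable_const)
  set p : ℝ := (b ^ k - a ^ k) / k.factorial with hpdef
  have hp0 : 0 ≤ p := div_nonneg (sub_nonneg.mpr (pow_le_pow_left₀ ha0 hab k)) (by positivity)
  have hbound : ∀ f ∈ F, μ (Ev f) ≤ ENNReal.ofReal p := by
    intro f hf
    have hinj : Function.Injective f := by
      simpa [hF, Finset.mem_filter] using hf
    set A : Fin k → Fin n × Fin n :=
      fun i => (f i, f ⟨(i.1 + 1) % k, Nat.mod_lt _ i.pos⟩) with hAdef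
    have hA : Function.Injective A := fun i i' h => hinj (congrArg Prod.fst h)
    set sarc : Finset (Fin n × Fin n) := Finset.image A Finset.univ with hsarc
    have hcard : sarc.card = k := by
      rw [hsarc, Finset.card_image_of_injective _ hA, Finset.card_univ, Fintype.card_fin]
    have hsum : ∀ ω, ∑ q ∈ sarc, w q.1 q.2 ω = cycleWeight (fun i j => w i j ω) f := by
      intro ω
      rw [hsarc, Finset.sum_image (fun i _ i' _ h => hA h)]
      rfl
    have hne : sarc.Nonempty := by
      rw [← Finset.card_pos, hcard]; omega
    have ht := tail_sum (fun q ω => w q.1 q.2 ω) (fun q => hmeas q.1 q.2) hindep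
      (fun q => hexp q.1 q.2) sarc hne a b hab
    rw [hcard] at ht
    have heq : {ω | a < ∑ q ∈ sarc, w q.1 q.2 ω ∧ ∑ q ∈ sarc, w q.1 q.2 ω ≤ b} = Ev f := by
      ext ω
      simp only [Set.mem_setOf_eq, hsum ω, hEvdef]
    rw [heq] at ht
    rw [max_eq_left hb0, max_eq_left ha0] at ht
    exact ht
  -- rewrite the integrand
  have hind : ∀ f ω, (if a < cycleWeight (fun i j => w i j ω) f ∧
      cycleWeight (fun i j => w i j ω) f ≤ b then (1:ℝ) else 0)
      = (Ev f).indicator (fun _ => (1:ℝ)) ω := by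
    intro f ω
    by_cases h : a < cycleWeight (fun i j => w i j ω) f ∧ cycleWeight (fun i j => w i j ω) f ≤ b
    · rw [if_pos h, Set.indicator_of_mem (show ω ∈ Ev f from h)]
    · rw [if_neg h, Set.indicator_of_notMem (show ω ∉ Ev f from h)]
  have hint : ∀ f : Fin k → Fin n, Integrable ((Ev f).indicator (fun _ => (1:ℝ))) μ := fun f =>
    (integrable_indicator_iff (hEvm f)).mpr (integrableOn_const (measure_ne_top _ _))
  have hcc : ∀ ω, cycleCountIn n k (fun i j => w i j ω) c₁ c₂
      = (1 / (k:ℝ)) * ∑ f ∈ F, (Ev f).indicator (fun _ => (1:ℝ)) ω := by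
    intro ω
    unfold cycleCountIn
    rw [← hF, ← hadef, ← hbdef]
    congr 1
    exact Finset.sum_congr rfl (fun f _ => hind f ω)
  calc ∫ ω, cycleCountIn n k (fun i j => w i j ω) c₁ c₂ ∂μ
      = ∫ ω, (1 / (k:ℝ)) * ∑ f ∈ F, (Ev f).indicator (fun _ => (1:ℝ)) ω ∂μ := by
        exact integral_congr_ae (Filter.Eventually.of_forall hcc)
    _ = (1 / (k:ℝ)) * ∑ f ∈ F, (μ (Ev f)).toReal := by
        rw [integral_const_mul, integral_finset_sum F (fun f _ => hint f)]
        congr 1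
        refine Finset.sum_congr rfl (fun f _ => ?_)
        rw [integral_indicator (hEvm f), setIntegral_const, smul_eq_mul, mul_one, Measure.real_def]
    _ ≤ (1 / (k:ℝ)) * ((n:ℝ) ^ k * p) := by
        apply mul_le_mul_of_nonneg_left ?_ (by positivity)
        have h1 : ∀ f ∈ F, (μ (Ev f)).toReal ≤ p := fun f hf =>
          ENNReal.toReal_le_of_le_ofReal hp0 (hbound f hf)
        calc ∑ f ∈ F, (μ (Ev f)).toReal ≤ F.card • p := Finset.sum_le_card_nsmul F _ p h1
          _ = (F.card : ℝ) * p := nsmul_eq_mul _ _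
          _ ≤ (n:ℝ) ^ k * p := by
              apply mul_le_mul_of_nonneg_right ?_ hp0
              have h2 : F.card ≤ n ^ k := by
                calc F.card ≤ (Finset.univ : Finset (Fin k → Fin n)).card :=
                      Finset.card_filter_le _ _
                  _ = n ^ k := by
                      rw [Finset.card_univ, Fintype.card_fun, Fintype.card_fin, Fintype.card_fin]
              exact_mod_cast h2
    _ = (c₂ ^ k - c₁ ^ k) * (k : ℝ) ^ k / ((k : ℝ) * (k.factorial : ℝ)) := by
        rw [hpdef, hbdef, hadef]
        have hkf : (0:ℝ) < k.factorial := by positivity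
        field_simp
        have hn' : (n:ℝ) ^ k * (n:ℝ)⁻¹ ^ k = 1 := by
          rw [← mul_pow, mul_inv_cancel₀ hnpos.ne', one_pow]
        linear_combination ((k:ℝ) ^ k * c₂ ^ k - (k:ℝ) ^ k * c₁ ^ k) * hn'
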